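/- Let (a_n) and (b_n) be sequences of nonnegative reals satisfying the recursion a_n ≤ a_{n−1}(1 − b_n a_{n−1}) for all n ≥ 1, with a_0 ≤ A. If additionally for all n, the geometric-mean bound (Π_{k=1}^n b_k^{-1/2})^{1/n} ≤ c ε_n holds with ε_n = n^{−1/2−α} for some α > 0, then a_n ≲ ε_n² = n^{−1−2α}, with implicit constant depending only on A, c, α. -/

import Mathlib

open Finset

/-- The recursion lemma behind the convergence of the (weak) orthogonal
greedy algorithm: if nonnegative sequences satisfy `a_n ≤ a_{n-1}(1 - b_n a_{n-1})`,
`a_0 ≤ A`, and the geometric-mean bound `(∏_{k=1}^n b_k^{-1/2})^{1/n} ≤ c n^{-1/2-α}`,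
then `a_n ≲ n^{-1-2α}`. -/
theorem greedy_recursion_decay
    (a b : ℕ → ℝ) (A c α : ℝ) (hα : 0 < α) (hc : 0 < c)
    (ha : ∀ n, 0 ≤ a n) (hb : ∀ n, 1 ≤ n → 0 < b n)
    (hrec : ∀ n, 1 ≤ n → a n ≤ a (n - 1) * (1 - b n * a (n - 1)))
    (ha0 : a 0 ≤ A)
    (hgm : ∀ n : ℕ, 1 ≤ n →
      (∏ k ∈ Finset.Icc 1 n, (b k) ^ (-(1 : ℝ) / 2)) ^ ((n : ℝ)⁻¹)
        ≤ c * (n : ℝ) ^ (-(1 : ℝ) / 2 - α)) :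
    ∃ C : ℝ, 0 < C ∧ ∀ n : ℕ, 1 ≤ n → a n ≤ C * (n : ℝ) ^ (-(1 : ℝ) - 2 * α) := by
  -- a is nonincreasing
  have hmono : ∀ n : ℕ, a (n + 1) ≤ a n := by
    intro n
    have h := hrec (n + 1) (by omega)
    simp only [Nat.add_sub_cancel] at h
    have hbpos := hb (n + 1) (by omega)
    calc a (n + 1) ≤ a n * (1 - b (n + 1) * a n) := h
      _ ≤ a n * 1 := by
          apply mul_le_mul_of_nonneg_left _ (ha n)
          nlinarith [hbpos, ha n]
      _ = a n := mul_one _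
  have hanti : ∀ m n : ℕ, m ≤ n → a n ≤ a m := by
    intro m n hmn
    induction n with
    | zero => simp_all
    | succ k ih =>
      rcases Nat.lt_or_ge m (k + 1) with h | h
      · exact (hmono k).trans (ih (by omega))
      · have : m = k + 1 := by omega
        simp [this]
  refine ⟨c ^ 2, by positivity, ?_⟩
  intro n hn
  have hnpos : (0 : ℝ) < n := by exact_mod_cast hn
  have hbnn : ∀ k ∈ Finset.Icc 1 n, (0 : ℝ) ≤ b k := fun k hk =>
    (hb k (Finset.mem_Icc.mp hk).1).le
  set P := ∏ k ∈ Finset.Icc 1 n, b k with hP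
  have hPpos : 0 < P := Finset.prod_pos (fun k hk => hb k (Finset.mem_Icc.mp hk).1)
  have hgm' := hgm n hn
  rw [Real.finset_prod_rpow _ _ hbnn, ← Real.rpow_mul hPpos.le] at hgm'
  -- hgm' : P ^ (-(1)/2 * n⁻¹) ≤ c * n ^ (-(1)/2 - α)
  have hLpos : 0 < P ^ (-(1:ℝ)/2 * (n:ℝ)⁻¹) := Real.rpow_pos_of_pos hPpos _
  have h2 : (c * (n:ℝ) ^ (-(1:ℝ)/2 - α)) ^ (-(2:ℝ)) ≤
      (P ^ (-(1:ℝ)/2 * (n:ℝ)⁻¹)) ^ (-(2:ℝ)) :=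
    Real.rpow_le_rpow_of_nonpos hLpos hgm' (by norm_num)
  have hL : (P ^ (-(1:ℝ)/2 * (n:ℝ)⁻¹)) ^ (-(2:ℝ)) = P ^ ((n:ℝ)⁻¹) := by
    rw [← Real.rpow_mul hPpos.le]
    congr 1
    ring
  have hR : (c * (n:ℝ) ^ (-(1:ℝ)/2 - α)) ^ (-(2:ℝ)) =
      c ^ (-(2:ℝ)) * (n:ℝ) ^ ((1:ℝ) + 2 * α) := by
    rw [Real.mul_rpow hc.le (Real.rpow_nonneg hnpos.le _), ← Real.rpow_mul hnpos.le]
    congr 1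
    ring
  rw [hL, hR] at h2
  -- AM-GM : P^(1/n) ≤ (1/n) ∑ b
  have hw : ∑ _k ∈ Finset.Icc 1 n, ((n:ℝ)⁻¹) = 1 := by
    rw [Finset.sum_const, Nat.card_Icc]
    simp only [Nat.add_sub_cancel, nsmul_eq_mul]
    field_simp
  have hamgm : ∏ k ∈ Finset.Icc 1 n, (b k) ^ ((n:ℝ)⁻¹) ≤
      ∑ k ∈ Finset.Icc 1 n, (n:ℝ)⁻¹ * b k :=
    Real.geom_mean_le_arith_mean_weighted _ _ _ (fun i _ => by positivity) hw hbnn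
  rw [Real.finset_prod_rpow _ _ hbnn, ← Finset.mul_sum] at hamgm
  set S := ∑ k ∈ Finset.Icc 1 n, b k with hS
  have hSnn : 0 ≤ S := Finset.sum_nonneg hbnn
  have hsum : c ^ (-(2:ℝ)) * (n:ℝ) ^ ((1:ℝ) + 2 * α) ≤ S := by
    calc c ^ (-(2:ℝ)) * (n:ℝ) ^ ((1:ℝ) + 2 * α) ≤ P ^ ((n:ℝ)⁻¹) := h2
      _ ≤ (n:ℝ)⁻¹ * S := hamgm
      _ ≤ 1 * S := by
          apply mul_le_mul_of_nonneg_right _ hSnn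
          exact inv_le_one_of_one_le₀ (by exact_mod_cast hn : (1:ℝ) ≤ n)
      _ = S := one_mul _
  have hXpos : 0 < c ^ (-(2:ℝ)) * (n:ℝ) ^ ((1:ℝ) + 2 * α) := by positivity
  have hXinv : (c ^ (-(2:ℝ)) * (n:ℝ) ^ ((1:ℝ) + 2 * α))⁻¹
      = c ^ 2 * (n:ℝ) ^ (-(1:ℝ) - 2 * α) := by
    rw [mul_inv, ← Real.rpow_neg hc.le, ← Real.rpow_neg hnpos.le,
      show -(-(2:ℝ)) = ((2:ℕ):ℝ) by norm_num, Real.rpow_natCast,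
      show -((1:ℝ) + 2 * α) = -(1:ℝ) - 2 * α by ring]
  -- split on whether a vanishes somewhere below n
  by_cases hz : ∃ k, k ≤ n ∧ a k = 0
  · obtain ⟨k, hk, hak⟩ := hz
    have : a n ≤ 0 := hak ▸ hanti k n hk
    calc a n ≤ 0 := this
      _ ≤ c ^ 2 * (n:ℝ) ^ (-(1:ℝ) - 2 * α) := by positivity
  · push_neg at hz
    have hapos : ∀ k, k ≤ n → 0 < a k := fun k hk => lt_of_le_of_ne (ha k) (Ne.symm (hz k hk))
    -- key: partial sums of b bounded by 1/a
    have key : ∀ m, m ≤ n → ∑ k ∈ Finset.Icc 1 m, b k ≤ (a m)⁻¹ := by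
      intro m
      induction m with
      | zero =>
        intro _
        simp only [show Finset.Icc 1 0 = ∅ from rfl, Finset.sum_empty]
        exact inv_nonneg.mpr (ha 0)
      | succ m ih =>
        intro hm
        have hmn : m ≤ n := by omega
        have ihm := ih hmn
        have h1 : 0 < a m := hapos m hmn
        have h2' : 0 < a (m + 1) := hapos (m + 1) hm
        have hbp : 0 < b (m + 1) := hb (m + 1) (by omega)
        have hrec' := hrec (m + 1) (by omega)
        simp only [Nat.add_sub_cancel] at hrec'
        have hinv : a m * (a m)⁻¹ = 1 := mul_inv_cancel₀ h1.ne'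
        have key2 : a (m + 1) * ((a m)⁻¹ + b (m + 1)) ≤ 1 := by
          nlinarith [sq_nonneg (b (m + 1) * a m), mul_pos hbp h1,
            mul_le_mul_of_nonneg_right hrec' (le_of_lt (by positivity :
              (0:ℝ) < (a m)⁻¹ + b (m + 1)))]
        have step : (a m)⁻¹ + b (m + 1) ≤ (a (m + 1))⁻¹ := by
          have h3 := mul_le_mul_of_nonneg_left key2 (inv_nonneg.mpr h2'.le)
          rwa [← mul_assoc, inv_mul_cancel₀ h2'.ne', one_mul, mul_one] at h3
        calc ∑ k ∈ Finset.Icc 1 (m + 1), b k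
            = (∑ k ∈ Finset.Icc 1 m, b k) + b (m + 1) := by
              rw [Finset.sum_Icc_succ_top (by omega : 1 ≤ m + 1)]
          _ ≤ (a m)⁻¹ + b (m + 1) := by linarith
          _ ≤ (a (m + 1))⁻¹ := step
    have hfin : c ^ (-(2:ℝ)) * (n:ℝ) ^ ((1:ℝ) + 2 * α) ≤ (a n)⁻¹ :=
      hsum.trans (key n le_rfl)
    have hanpos := hapos n le_rfl
    have : a n ≤ (c ^ (-(2:ℝ)) * (n:ℝ) ^ ((1:ℝ) + 2 * α))⁻¹ := by
      rw [← inv_inv (a n)]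
      exact inv_anti₀ hXpos hfin
    rwa [hXinv] at this
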